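/- For every non-meager filter F on ω, non*(F) ≥ 𝔟. -/

import Mathlib

open Set Cardinal

/-- The unbounding number 𝔟: least size of a ≤*-unbounded family in ω^ω. -/
noncomputable def bNumber : Cardinal :=
  sInf {c | ∃ U : Set (ℕ → ℕ), Cardinal.mk U = c ∧
    ∀ g : ℕ → ℕ, ∃ f ∈ U, {n | g n < f n}.Infinite}

/-- non*(F) for a filter F: least size of a family of infinite sets such that every
member of F almost contains some member of the family. -/
noncomputable def nonStarFilter (F : Set (Set ℕ)) : Cardinal :=
  sInf {c | ∃ 𝒳 : Set (Set ℕ), (∀ X ∈ 𝒳, X.Infinite) ∧ Cardinal.mk 𝒳 = c ∧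
    ∀ A ∈ F, ∃ X ∈ 𝒳, (X \ A).Finite}

/-- the "next element of X" function -/
noncomputable def nextFn (X : Set ℕ) (n : ℕ) : ℕ := sInf (X ∩ Set.Ici n)

lemma nextFn_spec {X : Set ℕ} (hX : X.Infinite) (n : ℕ) :
    nextFn X n ∈ X ∧ n ≤ nextFn X n := by
  have hne : (X ∩ Set.Ici n).Nonempty := by
    have : (X \ Set.Iio n).Nonempty := (hX.diff (Set.finite_Iio n)).nonempty
    obtain ⟨x, hx, hx2⟩ := this
    exact ⟨x, hx, Set.mem_Ici.mpr (not_lt.mp hx2)⟩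
  have := Nat.sInf_mem hne
  exact ⟨this.1, this.2⟩

theorem stmt12 (F : Set (Set ℕ))
    (hup : ∀ A ∈ F, ∀ B : Set ℕ, A ⊆ B → B ∈ F)
    (hinter : ∀ A ∈ F, ∀ B ∈ F, A ∩ B ∈ F)
    (huniv : Set.univ ∈ F)
    (hfree : ∀ A ∈ F, A.Infinite)
    (hcofin : ∀ A : Set ℕ, Aᶜ.Finite → A ∈ F)
    (hnonmeager : ¬ ∃ P : ℕ → Set ℕ, (∀ n, (P n).Finite) ∧ (∀ n, (P n).Nonempty) ∧
      (∀ m n, m ≠ n → Disjoint (P m) (P n)) ∧ (⋃ n, P n) = Set.univ ∧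
      ∀ A ∈ F, {n | A ∩ P n = ∅}.Finite) :
    bNumber ≤ nonStarFilter F := by
  have hS : ({c | ∃ 𝒳 : Set (Set ℕ), (∀ X ∈ 𝒳, X.Infinite) ∧ Cardinal.mk 𝒳 = c ∧
      ∀ A ∈ F, ∃ X ∈ 𝒳, (X \ A).Finite} : Set Cardinal).Nonempty := by
    refine ⟨Cardinal.mk {X : Set ℕ | X.Infinite}, {X : Set ℕ | X.Infinite}, ?_, rfl, ?_⟩
    · exact fun X hX => hX
    · intro A hA
      exact ⟨A, hfree A hA, by simp⟩
  obtain ⟨𝒳, h𝒳inf, h𝒳card, h𝒳cov⟩ := csInf_mem hS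
  rw [nonStarFilter, ← h𝒳card]
  by_contra hb
  push_neg at hb
  -- the family of nextFn's
  set U : Set (ℕ → ℕ) := nextFn '' 𝒳 with hU
  have hUlt : Cardinal.mk U < bNumber := lt_of_le_of_lt Cardinal.mk_image_le hb
  have hUbdd : ∃ g : ℕ → ℕ, ∀ f ∈ U, {n | g n < f n}.Finite := by
    by_contra hc
    push_neg at hc
    have : bNumber ≤ Cardinal.mk U := by
      apply csInf_le'
      refine ⟨U, rfl, ?_⟩
      intro g
      obtain ⟨f, hf, hf2⟩ := hc g
      exact ⟨f, hf, hf2⟩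
    exact absurd this (not_le.mpr hUlt)
  obtain ⟨g, hg⟩ := hUbdd
  -- build intervals
  set a : ℕ → ℕ := fun k => Nat.rec 0 (fun k ak => max (ak + 1) (g ak + 1)) k with ha
  have ha0 : a 0 = 0 := rfl
  have hasucc : ∀ k, a (k + 1) = max (a k + 1) (g (a k) + 1) := fun k => rfl
  have hlt : ∀ k, a k < a (k + 1) := by
    intro k; rw [hasucc]; exact lt_of_lt_of_le (Nat.lt_succ_self _) (le_max_left _ _)
  have hmono : StrictMono a := strictMono_nat_of_lt_succ hlt
  have hge : ∀ k, k ≤ a k := fun k => hmono.le_apply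
  have hglt : ∀ k, g (a k) < a (k + 1) := by
    intro k; rw [hasucc]; exact lt_of_lt_of_le (Nat.lt_succ_self _) (le_max_right _ _)
  set P : ℕ → Set ℕ := fun k => Set.Ico (a k) (a (k + 1)) with hP
  apply hnonmeager
  refine ⟨P, fun k => Set.finite_Ico _ _, fun k => ⟨a k, le_refl _, hlt k⟩, ?_, ?_, ?_⟩
  · -- disjoint
    have key : ∀ m n, m < n → Disjoint (P m) (P n) := by
      intro m n hmn
      rw [Set.disjoint_left]
      rintro x ⟨_, hx2⟩ ⟨hx3, _⟩
      have : a (m + 1) ≤ a n := hmono.monotone hmn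
      omega
    intro m n hmn
    rcases lt_or_gt_of_ne hmn with h | h
    · exact key m n h
    · exact (key n m h).symm
  · -- union is univ
    ext x
    simp only [Set.mem_iUnion, Set.mem_univ, iff_true]
    have hne : ∃ k, x < a (k + 1) := ⟨x, lt_of_lt_of_le (Nat.lt_succ_self x) (hge (x + 1))⟩
    set k := Nat.find hne with hk
    have h1 : x < a (k + 1) := Nat.find_spec hne
    have h2 : a k ≤ x := by
      rcases Nat.eq_zero_or_pos k with h | h
      · rw [h, ha0]; exact Nat.zero_le x
      · obtain ⟨j, hj⟩ := Nat.exists_eq_succ_of_ne_zero h.ne'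
        have hmin := Nat.find_min hne (m := j) (by omega)
        rw [hj]
        exact not_lt.mp hmin
    exact ⟨k, h2, h1⟩
  · -- every A ∈ F meets a.e. block
    intro A hA
    obtain ⟨X, hX𝒳, hXA⟩ := h𝒳cov A hA
    have hXinf : X.Infinite := h𝒳inf X hX𝒳
    have hfU : nextFn X ∈ U := ⟨X, hX𝒳, rfl⟩
    have hfin := hg _ hfU
    obtain ⟨N, hN⟩ := hfin.bddAbove
    obtain ⟨M, hM⟩ := hXA.bddAbove
    apply Set.Finite.subset (Set.finite_Iio (N + M + 2))
    intro k hk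
    simp only [Set.mem_setOf_eq] at hk
    by_contra hklt
    simp only [Set.mem_Iio, not_lt] at hklt
    -- k large: show A ∩ P k nonempty
    have hak : N + M + 2 ≤ a k := le_trans hklt (hge k)
    have h1 := nextFn_spec hXinf (a k)
    have hle : nextFn X (a k) ≤ g (a k) := by
      by_contra hc
      push_neg at hc
      have : a k ∈ {n | g n < nextFn X n} := hc
      have := hN this
      omega
    have hmem : nextFn X (a k) ∈ P k :=
      ⟨h1.2, lt_of_le_of_lt hle (hglt k)⟩
    have hXAmem : nextFn X (a k) ∈ A := by
      by_contra hc
      have : nextFn X (a k) ∈ X \ A := ⟨h1.1, hc⟩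
      have := hM this
      omega
    have : nextFn X (a k) ∈ A ∩ P k := ⟨hXAmem, hmem⟩
    rw [hk] at this
    exact this
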